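/- arXiv:0705.0519 — 3 statements merged into one kernel-verified Lean document; each statement's English description precedes it below -/
import Mathlib

section
/- For the Polya urn proportion martingale, the conditional bias vanishes: E[X_∞ − X_n | F_n] = 0, and the expected conditional variance satisfies E[(X_∞ − X_n)²] = 1/(6n) + o(1/n) as n → ∞. -/
open MeasureTheory ProbabilityTheory Filter Asymptotics

lemma aux_ind (x : ℝ) :
    ∫ u, (if u ≤ x then (1:ℝ) else 0) ∂(volume.restrict (Set.Icc (0:ℝ) 1))
      = max 0 (min 1 x) := by
  have h1 : (fun u => if u ≤ x then (1:ℝ) else 0) = (Set.Iic x).indicator (fun _ => 1) := by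
    ext u; simp [Set.indicator_apply, Set.mem_Iic]
  rw [h1, integral_indicator measurableSet_Iic, setIntegral_const, smul_eq_mul, mul_one, measureReal_def,
    Measure.restrict_apply measurableSet_Iic]
  have h2 : Set.Iic x ∩ Set.Icc (0:ℝ) 1 = Set.Icc 0 (min x 1) := by
    ext u; simp only [Set.mem_inter_iff, Set.mem_Iic, Set.mem_Icc, le_min_iff]; tauto
  rw [h2, Real.volume_Icc, sub_zero, ENNReal.toReal_ofReal']
  rw [max_comm, min_comm]

lemma master {Ω : Type*} {m m0 : MeasurableSpace Ω} (hm : m ≤ m0) (μ : Measure Ω)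
    [IsProbabilityMeasure μ] {U V Y : Ω → ℝ}
    (hUmeas : Measurable[m0] U)
    (hUlaw : μ.map U = volume.restrict (Set.Icc (0:ℝ) 1))
    (hindep : Indep (MeasurableSpace.comap U inferInstance) m μ)
    (hY : Measurable[m] Y) (hYbd : ∀ ω, Y ω ∈ Set.Icc (0:ℝ) 1)
    (hV : Measurable[m] V) (hVbd : ∀ ω, |V ω| ≤ 1) :
    ∫ ω, (if U ω ≤ Y ω then (1:ℝ) else 0) * V ω ∂μ = ∫ ω, Y ω * V ω ∂μ := by
  set T : Ω → ℝ × ℝ := fun ω => (Y ω, V ω) with hTdef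
  have hTm : Measurable[m] T := hY.prodMk hV
  have hTmeas : Measurable[m0] T := hTm.mono hm le_rfl
  have hindepTU : IndepFun T U μ := by
    exact indep_of_indep_of_le_left hindep.symm hTm.comap_le
  have hmap : μ.map (fun ω => (T ω, U ω)) = (μ.map T).prod (μ.map U) :=
    (indepFun_iff_map_prod_eq_prod_map_map hTmeas.aemeasurable hUmeas.aemeasurable).mp hindepTU
  -- the function on (ℝ × ℝ) × ℝ
  set φ : (ℝ × ℝ) × ℝ → ℝ :=
    fun p => (if p.2 ≤ max 0 (min 1 p.1.1) then (1:ℝ) else 0) * (max (-1) (min 1 p.1.2)) with hφdef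
  have hφmeas : Measurable φ := by
    apply Measurable.mul
    · exact Measurable.ite
        (measurableSet_le measurable_snd
          ((measurable_const.max (measurable_const.min (measurable_fst.comp measurable_fst)))))
        measurable_const measurable_const
    · exact measurable_const.max (measurable_const.min (measurable_snd.comp measurable_fst))
  have hφbd : ∀ p, ‖φ p‖ ≤ 1 := by
    intro p
    rw [hφdef, norm_mul]
    have h1 : ‖if p.2 ≤ max 0 (min 1 p.1.1) then (1:ℝ) else 0‖ ≤ 1 := by
      split <;> simp
    have h2 : ‖max (-1) (min 1 p.1.2)‖ ≤ 1 := by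
      rw [Real.norm_eq_abs, abs_le]
      constructor
      · exact le_max_left _ _
      · exact max_le (by norm_num) (min_le_left _ _)
    calc _ ≤ 1 * 1 := mul_le_mul h1 h2 (norm_nonneg _) (by norm_num)
      _ = 1 := by norm_num
  -- rewrite LHS as integral of φ ∘ (T, U)
  have hLHS : ∫ ω, (if U ω ≤ Y ω then (1:ℝ) else 0) * V ω ∂μ = ∫ ω, φ (T ω, U ω) ∂μ := by
    apply integral_congr_ae
    filter_upwards with ω
    have hy := hYbd ω
    have hv := hVbd ω
    rw [Set.mem_Icc] at hy
    rw [abs_le] at hv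
    have e1 : max 0 (min 1 (Y ω)) = Y ω := by
      rw [min_eq_right hy.2, max_eq_right hy.1]
    have e2 : max (-1) (min 1 (V ω)) = V ω := by
      rw [min_eq_right hv.2, max_eq_right hv.1]
    simp only [hφdef, hTdef, e1, e2]
  rw [hLHS]
  have hpair : AEMeasurable (fun ω => (T ω, U ω)) μ :=
    (hTmeas.prodMk hUmeas).aemeasurable
  rw [← integral_map hpair hφmeas.aestronglyMeasurable, hmap]
  haveI : IsProbabilityMeasure (μ.map T) := Measure.isProbabilityMeasure_map hTmeas.aemeasurable
  haveI : IsProbabilityMeasure (μ.map U) := Measure.isProbabilityMeasure_map hUmeas.aemeasurable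
  have hint : Integrable φ ((μ.map T).prod (μ.map U)) := by
    refine ⟨hφmeas.aestronglyMeasurable, ?_⟩
    exact (HasFiniteIntegral.of_bounded (C := 1) (Filter.Eventually.of_forall hφbd))
  rw [MeasureTheory.integral_prod _ hint]
  -- inner integral
  have hinner : ∀ p : ℝ × ℝ, ∫ u, φ (p, u) ∂(μ.map U)
      = (max 0 (min 1 p.1)) * (max (-1) (min 1 p.2)) := by
    intro p
    rw [hUlaw]
    simp only [hφdef]
    rw [integral_mul_const, aux_ind]
    have : min 1 (max 0 (min 1 p.1)) = max 0 (min 1 p.1) := by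
      apply min_eq_right
      exact max_le (by norm_num) (min_le_left _ _)
    rw [this]
    have : max 0 (max 0 (min 1 p.1)) = max 0 (min 1 p.1) := by
      rw [max_eq_right (le_max_left _ _)]
    rw [this]
  rw [integral_congr_ae (Filter.Eventually.of_forall hinner)]
  rw [integral_map hTmeas.aemeasurable]
  · apply integral_congr_ae
    filter_upwards with ω
    have hy := hYbd ω
    have hv := hVbd ω
    rw [Set.mem_Icc] at hy
    rw [abs_le] at hv
    show max 0 (min 1 (Y ω)) * max (-1) (min 1 (V ω)) = Y ω * V ω
    rw [min_eq_right hy.2, max_eq_right hy.1, min_eq_right hv.2, max_eq_right hv.1]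
  · exact ((continuous_const.max (continuous_const.min continuous_fst)).mul
      (continuous_const.max (continuous_const.min continuous_snd))).measurable.aestronglyMeasurable

lemma int_of_bd {Ω : Type*} [MeasurableSpace Ω] {μ : Measure Ω} [IsFiniteMeasure μ] {f : Ω → ℝ}
    (hf : AEStronglyMeasurable f μ) {C : ℝ} (h : ∀ᵐ ω ∂μ, |f ω| ≤ C) : Integrable f μ :=
  ⟨hf, HasFiniteIntegral.of_bounded (h.mono fun ω hω => by rwa [Real.norm_eq_abs])⟩

/-- For the Polya urn: the conditional bias of `X∞ - X n` given `F n` vanishes, and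
`E[(X∞ - X n)²] = 1/(6n) + o(1/n)`. -/
theorem stmt3 {Ω : Type*} [MeasurableSpace Ω] (μ : Measure Ω) [IsProbabilityMeasure μ]
    (U : ℕ → Ω → ℝ) (X : ℕ → Ω → ℝ)
    (hUmeas : ∀ n, Measurable (U n))
    (hXmeas : ∀ n, Measurable (X n))
    (hUlaw : ∀ n, μ.map (U n) = volume.restrict (Set.Icc (0 : ℝ) 1))
    (F : ℕ → MeasurableSpace Ω)
    (hF : ∀ n, F n = ⨆ k ∈ Finset.range (n + 1), MeasurableSpace.comap (X k) inferInstance)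
    (hindep : ∀ n, Indep (MeasurableSpace.comap (U (n + 1)) inferInstance) (F n) μ)
    (hX0 : ∀ ω, X 0 ω = 1 / 2)
    (hrec : ∀ n ω, X (n + 1) ω
      = X n ω + (1 / ((n : ℝ) + 3)) * ((if U (n + 1) ω ≤ X n ω then (1 : ℝ) else 0) - X n ω))
    (Xinf : Ω → ℝ) (hXinfmeas : Measurable Xinf)
    (hconv : ∀ᵐ ω ∂μ, Tendsto (fun n => X n ω) atTop (nhds (Xinf ω)))
    (hunif : μ.map Xinf = volume.restrict (Set.Icc (0 : ℝ) 1)) :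
    (∀ n, condExp (F n) μ (fun ω => Xinf ω - X n ω) =ᵐ[μ] fun _ => (0 : ℝ)) ∧
    (fun n : ℕ => (∫ ω, (Xinf ω - X n ω) ^ 2 ∂μ) - 1 / (6 * (n : ℝ)))
      =o[atTop] (fun n : ℕ => 1 / (n : ℝ)) := by
  classical
  -- basic facts
  have hFle : ∀ n, F n ≤ ‹MeasurableSpace Ω› := by
    intro n
    rw [hF n]
    apply iSup_le; intro k; apply iSup_le; intro _
    exact (hXmeas k).comap_le
  have hFmono : ∀ {n m : ℕ}, n ≤ m → F n ≤ F m := by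
    intro n m hnm
    rw [hF n, hF m]
    apply iSup_le; intro k; apply iSup_le; intro hk
    have : k ∈ Finset.range (m + 1) := by
      simp only [Finset.mem_range] at hk ⊢; omega
    exact le_iSup₂ (f := fun k (_ : k ∈ Finset.range (m+1)) =>
      MeasurableSpace.comap (X k) inferInstance) k this
  have hXFn : ∀ n, Measurable[F n] (X n) := by
    intro n
    rw [hF n]
    have : MeasurableSpace.comap (X n) inferInstance
        ≤ ⨆ k ∈ Finset.range (n + 1), MeasurableSpace.comap (X k) inferInstance :=
      le_iSup₂ (f := fun k (_ : k ∈ Finset.range (n+1)) =>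
        MeasurableSpace.comap (X k) inferInstance) n (by simp)
    exact Measurable.mono (comap_measurable (X n)) this le_rfl
  have hXbd : ∀ n ω, X n ω ∈ Set.Icc (0:ℝ) 1 := by
    intro n
    induction n with
    | zero => intro ω; rw [hX0 ω]; constructor <;> norm_num
    | succ n ih =>
      intro ω
      have h := hrec n ω
      have hb := (ih ω)
      rw [Set.mem_Icc] at hb ⊢
      have hc0 : (0:ℝ) < 1 / ((n : ℝ) + 3) := by positivity
      have hc1 : 1 / ((n : ℝ) + 3) ≤ 1 := by
        rw [div_le_one (by positivity)]; linarith [Nat.cast_nonneg (α := ℝ) n]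
      split at h <;> constructor <;> nlinarith [hb.1, hb.2]
  have hXbd' : ∀ n ω, |X n ω| ≤ 1 := by
    intro n ω
    have := hXbd n ω
    rw [Set.mem_Icc] at this
    rw [abs_le]; exact ⟨by linarith [this.1], this.2⟩
  have hXint : ∀ n, Integrable (X n) μ := fun n =>
    int_of_bd (hXmeas n).aestronglyMeasurable (Filter.Eventually.of_forall (hXbd' n))
  -- B n = indicator
  set B : ℕ → Ω → ℝ := fun n ω => if U (n + 1) ω ≤ X n ω then (1:ℝ) else 0 with hBdef
  have hBmeas : ∀ n, Measurable (B n) :=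
    fun n => Measurable.ite (measurableSet_le (hUmeas (n+1)) (hXmeas n))
      measurable_const measurable_const
  have hBbd : ∀ n ω, |B n ω| ≤ 1 := by
    intro n ω; simp only [hBdef]; split <;> norm_num
  have hBint : ∀ n, Integrable (B n) μ := fun n =>
    int_of_bd (hBmeas n).aestronglyMeasurable (Filter.Eventually.of_forall (hBbd n))
  -- master application
  have hM : ∀ (n : ℕ) (V : Ω → ℝ), Measurable[F n] V → (∀ ω, |V ω| ≤ 1) →
      ∫ ω, B n ω * V ω ∂μ = ∫ ω, X n ω * V ω ∂μ := by
    intro n V hV hVb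
    exact master (hFle n) μ (hUmeas (n+1)) (hUlaw (n+1)) (hindep n)
      (hXFn n) (hXbd n) hV hVb
  -- conditional expectation of B n
  have hB : ∀ n, μ[B n | F n] =ᵐ[μ] X n := by
    intro n
    haveI := isFiniteMeasure_trim (hFle n) (μ := μ)
    refine (ae_eq_condExp_of_forall_setIntegral_eq (hFle n) (hBint n)
      (fun s _ _ => (hXint n).integrableOn) ?_
      ((hXFn n).stronglyMeasurable.aestronglyMeasurable)).symm
    intro s hs _
    have hsm : MeasurableSet s := hFle n s hs
    have e1 : ∫ x in s, X n x ∂μ = ∫ x, X n x * s.indicator (fun _ => (1:ℝ)) x ∂μ := by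
      rw [← integral_indicator hsm]
      congr 1; ext x
      by_cases hx : x ∈ s <;> simp [Set.indicator_apply, hx]
    have e2 : ∫ x in s, B n x ∂μ = ∫ x, B n x * s.indicator (fun _ => (1:ℝ)) x ∂μ := by
      rw [← integral_indicator hsm]
      congr 1; ext x
      by_cases hx : x ∈ s <;> simp [Set.indicator_apply, hx]
    rw [e1, e2, hM n _ (measurable_const.indicator hs)
      (fun ω => by by_cases hx : ω ∈ s <;> simp [Set.indicator_apply, hx])]
  -- one-step martingale
  have hsplit : ∀ n, X (n+1) = fun ω =>
      (1 - 1/((n:ℝ)+3)) • X n ω + (1/((n:ℝ)+3)) • B n ω := by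
    intro n; funext ω; rw [hrec n ω]; simp only [smul_eq_mul, hBdef]; ring
  have hstep : ∀ n, μ[X (n+1) | F n] =ᵐ[μ] X n := by
    intro n
    haveI := isFiniteMeasure_trim (hFle n) (μ := μ)
    rw [hsplit n]
    have h1 : Integrable (fun ω => (1 - 1/((n:ℝ)+3)) • X n ω) μ := by
      simpa [smul_eq_mul] using (hXint n).const_mul (1 - 1/((n:ℝ)+3))
    have h2 : Integrable (fun ω => (1/((n:ℝ)+3)) • B n ω) μ := by
      simpa [smul_eq_mul] using (hBint n).const_mul (1/((n:ℝ)+3))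
    refine (condExp_add h1 h2 (F n)).trans ?_
    have e1 : μ[fun ω => (1 - 1/((n:ℝ)+3)) • X n ω | F n]
        =ᵐ[μ] fun ω => (1 - 1/((n:ℝ)+3)) • X n ω := by
      have := condExp_smul (m := F n) (μ := μ) (1 - 1/((n:ℝ)+3)) (X n)
      refine this.trans ?_
      rw [condExp_of_stronglyMeasurable (hFle n) (hXFn n).stronglyMeasurable (hXint n)]
      filter_upwards with ω; rfl
    have e2 : μ[fun ω => (1/((n:ℝ)+3)) • B n ω | F n]
        =ᵐ[μ] fun ω => (1/((n:ℝ)+3)) • X n ω := by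
      have := condExp_smul (m := F n) (μ := μ) (1/((n:ℝ)+3)) (B n)
      refine this.trans ?_
      filter_upwards [hB n] with ω hω
      simp only [Pi.smul_apply, hω]
    filter_upwards [e1, e2] with ω h1 h2
    rw [Pi.add_apply, h1, h2]
    simp only [smul_eq_mul]
    ring
  -- multi-step martingale
  have hmart : ∀ n k, μ[X (n+k) | F n] =ᵐ[μ] X n := by
    intro n k
    induction k with
    | zero =>
      simp only [Nat.add_zero]
      rw [condExp_of_stronglyMeasurable (hFle n) (hXFn n).stronglyMeasurable (hXint n)]
    | succ k ih =>
      haveI := isFiniteMeasure_trim (hFle (n+k)) (μ := μ)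
      have h1 : μ[μ[X (n+k+1) | F (n+k)] | F n] =ᵐ[μ] μ[X (n+k+1) | F n] :=
        condExp_condExp_of_le (hFmono (Nat.le_add_right n k)) (hFle (n+k))
      have h2 : μ[μ[X (n+k+1) | F (n+k)] | F n] =ᵐ[μ] μ[X (n+k) | F n] :=
        condExp_congr_ae (hstep (n+k))
      exact (h1.symm.trans h2).trans ih
  -- Xinf bounds
  have hXinfbd : ∀ᵐ ω ∂μ, |Xinf ω| ≤ 1 := by
    filter_upwards [hconv] with ω hω
    have h0 : Xinf ω ∈ Set.Icc (0:ℝ) 1 :=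
      isClosed_Icc.mem_of_tendsto hω (Filter.Eventually.of_forall fun n => hXbd n ω)
    rw [Set.mem_Icc] at h0
    rw [abs_le]; exact ⟨by linarith [h0.1], h0.2⟩
  have hXinfint : Integrable Xinf μ := int_of_bd hXinfmeas.aestronglyMeasurable hXinfbd
  -- L1 convergence
  have hL1 : Tendsto (fun m => ∫ ω, |Xinf ω - X m ω| ∂μ) atTop (nhds 0) := by
    have := MeasureTheory.tendsto_integral_of_dominated_convergence
      (F := fun m ω => |Xinf ω - X m ω|) (f := fun _ => (0:ℝ)) (bound := fun _ => 2) (μ := μ)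
      (fun m => ((hXinfmeas.sub (hXmeas m)).abs).aestronglyMeasurable)
      (integrable_const 2)
      (fun m => by
        filter_upwards [hXinfbd] with ω hω
        rw [Real.norm_eq_abs, abs_abs]
        calc |Xinf ω - X m ω| ≤ |Xinf ω| + |X m ω| := abs_sub _ _
          _ ≤ 2 := by linarith [hXbd' m ω])
      (by
        filter_upwards [hconv] with ω hω
        have : Tendsto (fun m => Xinf ω - X m ω) atTop (nhds (Xinf ω - Xinf ω)) :=
          tendsto_const_nhds.sub hω
        rw [sub_self] at this
        simpa using this.abs)
    simpa using this
  -- condexp of Xinf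
  have hcond : ∀ n, μ[Xinf | F n] =ᵐ[μ] X n := by
    intro n
    haveI := isFiniteMeasure_trim (hFle n) (μ := μ)
    have hg : Integrable (μ[Xinf | F n]) μ := integrable_condExp
    have key : ∫ ω, |(μ[Xinf | F n]) ω - X n ω| ∂μ = 0 := by
      have hle : ∀ k : ℕ, ∫ ω, |(μ[Xinf | F n]) ω - X n ω| ∂μ
          ≤ ∫ ω, |Xinf ω - X (n+k) ω| ∂μ := by
        intro k
        have heq : (fun ω => (μ[Xinf | F n]) ω - X n ω)
            =ᵐ[μ] μ[fun ω => Xinf ω - X (n+k) ω | F n] := by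
          have h1 : μ[fun ω => Xinf ω - X (n+k) ω | F n]
              =ᵐ[μ] μ[Xinf | F n] - μ[X (n+k) | F n] := condExp_sub hXinfint (hXint _) (F n)
          have h2 := hmart n k
          filter_upwards [h1, h2] with ω h1 h2
          rw [h1]
          simp only [Pi.sub_apply, h2]
        calc ∫ ω, |(μ[Xinf | F n]) ω - X n ω| ∂μ
            = ∫ ω, |(μ[fun ω => Xinf ω - X (n+k) ω | F n]) ω| ∂μ := by
              apply integral_congr_ae
              filter_upwards [heq] with ω h
              rw [h]
          _ ≤ ∫ ω, |Xinf ω - X (n+k) ω| ∂μ := integral_abs_condExp_le _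
      have h0 : Tendsto (fun k : ℕ => ∫ ω, |Xinf ω - X (n+k) ω| ∂μ) atTop (nhds 0) := by
        have : Tendsto (fun k : ℕ => n + k) atTop atTop :=
          tendsto_atTop_mono (fun k => Nat.le_add_left k n) tendsto_id
        exact hL1.comp this
      have hge : ∫ ω, |(μ[Xinf | F n]) ω - X n ω| ∂μ ≤ 0 :=
        le_of_tendsto_of_tendsto' tendsto_const_nhds h0 hle |>.trans_eq rfl
      have hnn : 0 ≤ ∫ ω, |(μ[Xinf | F n]) ω - X n ω| ∂μ :=
        integral_nonneg fun ω => abs_nonneg _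
      linarith
    have hint : Integrable (fun ω => |(μ[Xinf | F n]) ω - X n ω|) μ := (hg.sub (hXint n)).abs
    have := (integral_eq_zero_iff_of_nonneg (fun ω => abs_nonneg _) hint).mp key
    filter_upwards [this] with ω h
    have : |(μ[Xinf | F n]) ω - X n ω| = 0 := h
    rw [abs_eq_zero, sub_eq_zero] at this
    exact this
  -- ============ PART 1 conclusion and PART 2 ============
  have hpart1 : ∀ n, condExp (F n) μ (fun ω => Xinf ω - X n ω) =ᵐ[μ] fun _ => (0 : ℝ) := by
    intro n
    haveI := isFiniteMeasure_trim (hFle n) (μ := μ)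
    have h1 : μ[fun ω => Xinf ω - X n ω | F n] =ᵐ[μ] μ[Xinf|F n] - μ[X n|F n] :=
      condExp_sub hXinfint (hXint n) (F n)
    have h3 : μ[X n|F n] = X n :=
      condExp_of_stronglyMeasurable (hFle n) (hXFn n).stronglyMeasurable (hXint n)
    filter_upwards [h1, hcond n] with ω e1 e2
    rw [e1, Pi.sub_apply, e2, h3, sub_self]
  refine ⟨hpart1, ?_⟩
  -- expectations
  have hEX : ∀ n, ∫ ω, X n ω ∂μ = 1/2 := by
    intro n
    induction n with
    | zero =>
      have h0 : X 0 = fun _ => (1:ℝ)/2 := funext hX0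
      rw [h0, integral_const]; simp
    | succ n ih =>
      have hBint' : ∫ ω, B n ω ∂μ = 1/2 := by
        have h := hM n (fun _ => 1) measurable_const (fun ω => by norm_num)
        simp only [mul_one] at h
        rw [h, ih]
      have h1 : Integrable (fun ω => (1 - 1/((n:ℝ)+3)) • X n ω) μ := by
        simpa [smul_eq_mul] using (hXint n).const_mul (1 - 1/((n:ℝ)+3))
      have h2 : Integrable (fun ω => (1/((n:ℝ)+3)) • B n ω) μ := by
        simpa [smul_eq_mul] using (hBint n).const_mul (1/((n:ℝ)+3))
      rw [hsplit n, integral_add h1 h2]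
      simp only [smul_eq_mul]
      rw [integral_const_mul, integral_const_mul, ih, hBint']
      ring
  have hXX : ∀ n, ∫ ω, B n ω * X n ω ∂μ = ∫ ω, X n ω * X n ω ∂μ :=
    fun n => hM n (X n) (hXFn n) (hXbd' n)
  -- second moments
  have hsqint : ∀ n, Integrable (fun ω => (X n ω)^2) μ := by
    intro n
    refine int_of_bd (C := 1) ((hXmeas n).pow_const 2).aestronglyMeasurable
      (Filter.Eventually.of_forall fun ω => ?_)
    rw [abs_pow]
    exact pow_le_one₀ (abs_nonneg _) (hXbd' n ω)
  have hBXint : ∀ n, Integrable (fun ω => B n ω * X n ω) μ := by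
    intro n
    refine int_of_bd (C := 1) ((hBmeas n).mul (hXmeas n)).aestronglyMeasurable
      (Filter.Eventually.of_forall fun ω => ?_)
    rw [abs_mul]
    exact mul_le_one₀ (hBbd n ω) (abs_nonneg _) (hXbd' n ω)
  have ha : ∀ n, ∫ ω, (X n ω)^2 ∂μ = (2*(n:ℝ)+3)/(6*((n:ℝ)+2)) := by
    intro n
    induction n with
    | zero =>
      have h0 : (fun ω => (X 0 ω)^2) = fun _ => (1/4 : ℝ) := by
        funext ω; rw [hX0]; norm_num
      rw [h0, integral_const]; simp; norm_num
    | succ n ih =>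
      have hc : ((n:ℝ)+3) ≠ 0 := by positivity
      set c : ℝ := 1/((n:ℝ)+3) with hcdef
      have hpt : ∀ ω, (X (n+1) ω)^2
          = (1-c)^2 * (X n ω)^2 + (2*c*(1-c)) * (B n ω * X n ω) + c^2 * B n ω := by
        intro ω
        have hb : (B n ω)^2 = B n ω := by
          simp only [hBdef]; split <;> norm_num
        have hx : X (n+1) ω = X n ω + c * (B n ω - X n ω) := hrec n ω
        rw [hx]
        linear_combination (c^2) * hb
      have hBint' : ∫ ω, B n ω ∂μ = 1/2 := by
        have h := hM n (fun _ => 1) measurable_const (fun ω => by norm_num)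
        simp only [mul_one] at h
        rw [h, hEX n]
      have i1 : Integrable (fun ω => (1-c)^2 * (X n ω)^2) μ := (hsqint n).const_mul _
      have i2 : Integrable (fun ω => (2*c*(1-c)) * (B n ω * X n ω)) μ := (hBXint n).const_mul _
      have i3 : Integrable (fun ω => c^2 * B n ω) μ := (hBint n).const_mul _
      have i12 : Integrable (fun ω => (1-c)^2 * (X n ω)^2 + (2*c*(1-c)) * (B n ω * X n ω)) μ := by
        exact i1.add i2
      push_cast
      calc ∫ ω, (X (n+1) ω)^2 ∂μ
          = ∫ ω, ((1-c)^2 * (X n ω)^2 + (2*c*(1-c)) * (B n ω * X n ω) + c^2 * B n ω) ∂μ := by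
            exact integral_congr_ae (Filter.Eventually.of_forall hpt)
        _ = (1-c)^2 * (∫ ω, (X n ω)^2 ∂μ) + (2*c*(1-c)) * (∫ ω, B n ω * X n ω ∂μ)
            + c^2 * (∫ ω, B n ω ∂μ) := by
            rw [integral_add i12 i3, integral_add i1 i2,
              integral_const_mul, integral_const_mul, integral_const_mul]
        _ = (1-c)^2 * ((2*(n:ℝ)+3)/(6*((n:ℝ)+2))) + (2*c*(1-c)) * ((2*(n:ℝ)+3)/(6*((n:ℝ)+2)))
            + c^2 * (1/2) := by
            have hXX2 : ∫ ω, B n ω * X n ω ∂μ = (2*(n:ℝ)+3)/(6*((n:ℝ)+2)) := by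
              rw [hXX n, ← ih]
              exact integral_congr_ae (Filter.Eventually.of_forall fun ω => (pow_two _).symm)
            rw [ih, hBint', hXX2]
        _ = (2*((n:ℝ)+1)+3)/(6*(((n:ℝ)+1)+2)) := by
            rw [hcdef]
            field_simp
            ring
  -- E[Xinf^2] = 1/3
  have hXinf2 : ∫ ω, (Xinf ω)^2 ∂μ = 1/3 := by
    have h1 : ∫ ω, (Xinf ω)^2 ∂μ = ∫ x, x^2 ∂(μ.map Xinf) :=
      (integral_map hXinfmeas.aemeasurable
        ((measurable_id.pow_const 2).aestronglyMeasurable)).symm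
    rw [h1, hunif, MeasureTheory.integral_Icc_eq_integral_Ioc,
      ← intervalIntegral.integral_of_le (by norm_num : (0:ℝ) ≤ 1),
      _root_.integral_pow]
    norm_num
  -- cross term
  have hcross : ∀ n, ∫ ω, X n ω * Xinf ω ∂μ = ∫ ω, (X n ω)^2 ∂μ := by
    intro n
    haveI := isFiniteMeasure_trim (hFle n) (μ := μ)
    have hmul : Integrable (X n * Xinf) μ := by
      refine int_of_bd (C := 1) ((hXmeas n).mul hXinfmeas).aestronglyMeasurable ?_
      filter_upwards [hXinfbd] with ω h
      rw [Pi.mul_apply, abs_mul]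
      exact mul_le_one₀ (hXbd' n ω) (abs_nonneg _) h
    have h1 : μ[X n * Xinf | F n] =ᵐ[μ] X n * μ[Xinf|F n] :=
      condExp_mul_of_stronglyMeasurable_left (hXFn n).stronglyMeasurable hmul hXinfint
    have h2 : μ[X n * Xinf | F n] =ᵐ[μ] fun ω => (X n ω)^2 := by
      filter_upwards [h1, hcond n] with ω e1 e2
      rw [e1, Pi.mul_apply, e2, sq]
    calc ∫ ω, X n ω * Xinf ω ∂μ
        = ∫ ω, (μ[X n * Xinf|F n]) ω ∂μ := (integral_condExp (hFle n)).symm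
      _ = ∫ ω, (X n ω)^2 ∂μ := integral_congr_ae h2
  -- key identity
  have hkey : ∀ n, ∫ ω, (Xinf ω - X n ω)^2 ∂μ = 1/(6*((n:ℝ)+2)) := by
    intro n
    have hi1 : Integrable (fun ω => (Xinf ω)^2) μ := by
      refine int_of_bd (C := 1) (hXinfmeas.pow_const 2).aestronglyMeasurable ?_
      filter_upwards [hXinfbd] with ω h
      rw [abs_pow]
      exact pow_le_one₀ (abs_nonneg _) h
    have hi2 : Integrable (fun ω => (2:ℝ) * (X n ω * Xinf ω)) μ := by
      refine Integrable.const_mul ?_ 2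
      refine int_of_bd (C := 1) ((hXmeas n).mul hXinfmeas).aestronglyMeasurable ?_
      filter_upwards [hXinfbd] with ω h
      rw [abs_mul]
      exact mul_le_one₀ (hXbd' n ω) (abs_nonneg _) h
    have hi12 : Integrable (fun ω => (Xinf ω)^2 - (2:ℝ) * (X n ω * Xinf ω)) μ := hi1.sub hi2
    have hmul2 : ∫ ω, (2:ℝ) * (X n ω * Xinf ω) ∂μ = 2 * ∫ ω, X n ω * Xinf ω ∂μ :=
      integral_const_mul 2 _
    calc ∫ ω, (Xinf ω - X n ω)^2 ∂μ
        = ∫ ω, ((Xinf ω)^2 - 2*(X n ω * Xinf ω) + (X n ω)^2) ∂μ :=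
          integral_congr_ae (Filter.Eventually.of_forall fun ω => by ring)
      _ = (∫ ω, (Xinf ω)^2 ∂μ) - 2 * (∫ ω, X n ω * Xinf ω ∂μ) + ∫ ω, (X n ω)^2 ∂μ := by
          rw [integral_add hi12 (hsqint n), integral_sub hi1 hi2, hmul2]
      _ = 1/3 - 2 * ((2*(n:ℝ)+3)/(6*((n:ℝ)+2))) + (2*(n:ℝ)+3)/(6*((n:ℝ)+2)) := by
          rw [hXinf2, hcross n, ha n]
      _ = 1/(6*((n:ℝ)+2)) := by
          have hne : ((n:ℝ)+2) ≠ 0 := by positivity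
          field_simp
          ring
  -- conclude littleO
  have heq : (fun n : ℕ => (∫ ω, (Xinf ω - X n ω) ^ 2 ∂μ) - 1 / (6 * (n : ℝ)))
      = fun n : ℕ => 1/(6*((n:ℝ)+2)) - 1/(6*(n:ℝ)) := funext fun n => by rw [hkey n]
  rw [heq, Asymptotics.isLittleO_iff]
  intro c hc
  obtain ⟨N, hN⟩ := exists_nat_gt (1/(3*c))
  filter_upwards [Filter.eventually_ge_atTop (max N 1)] with n hn
  have hn1 : (1:ℝ) ≤ (n:ℝ) := by exact_mod_cast le_trans (le_max_right N 1) hn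
  have hnN : (N:ℝ) ≤ (n:ℝ) := by exact_mod_cast le_trans (le_max_left N 1) hn
  have hx : (0:ℝ) < (n:ℝ) := by linarith
  have e : 1/(6*((n:ℝ)+2)) - 1/(6*(n:ℝ)) = -(1/(3*(n:ℝ)*((n:ℝ)+2))) := by
    field_simp
    ring
  rw [e, norm_neg, Real.norm_eq_abs, Real.norm_eq_abs,
    abs_of_nonneg (by positivity), abs_of_nonneg (by positivity), mul_one_div,
    div_le_div_iff₀ (by positivity) hx]
  have hcn : 1/(3*c) < (n:ℝ) + 2 := by linarith
  rw [div_lt_iff₀ (by positivity)] at hcn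
  nlinarith
end

section
/- Under hypotheses (H1) and (H2) with the same algebra D and sequence (α_n), hypothesis (H3) holds with symmetric bias operator à = (Ā + A̲)/2. -/
open MeasureTheory ProbabilityTheory Filter

/-- If hypotheses (H1) and (H2) hold with the same algebra `D` and the same sequence
`(αₙ)`, then (H3) holds with symmetric bias operator `Ã = (Ā + A̲)/2`. -/
theorem stmt14 {Ω E : Type*} [MeasurableSpace Ω] [MeasurableSpace E]
    (μ : Measure Ω) [IsProbabilityMeasure μ]
    (Y : Ω → E) (Yn : ℕ → Ω → E) (hY : Measurable Y) (hYn : ∀ n, Measurable (Yn n))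
    (D : Set (E → ℝ))
    (hDmeas : ∀ f ∈ D, Measurable f) (hDbdd : ∀ f ∈ D, ∃ C, ∀ x, |f x| ≤ C)
    (hDone : (fun _ => (1 : ℝ)) ∈ D)
    (hDadd : ∀ f ∈ D, ∀ g ∈ D, f + g ∈ D) (hDmul : ∀ f ∈ D, ∀ g ∈ D, f * g ∈ D)
    (hDsmul : ∀ c : ℝ, ∀ f ∈ D, c • f ∈ D)
    (hDdense : ∀ f : E → ℝ, MemLp f 2 (μ.map Y) → ∀ ε : ℝ, 0 < ε →
      ∃ g ∈ D, eLpNorm (f - g) 2 (μ.map Y) < ENNReal.ofReal ε)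
    (α : ℕ → ℝ) (hα : ∀ n, 0 < α n)
    (Abar Aund : (E → ℝ) → E → ℝ)
    (hAbarL2 : ∀ φ ∈ D, MemLp (Abar φ) 2 (μ.map Y))
    (hAundL2 : ∀ φ ∈ D, MemLp (Aund φ) 2 (μ.map Y))
    (hH1 : ∀ φ ∈ D, ∀ χ ∈ D,
      Tendsto (fun n => α n * ∫ ω, (φ (Yn n ω) - φ (Y ω)) * χ (Y ω) ∂μ) atTop
        (nhds (∫ y, Abar φ y * χ y ∂(μ.map Y))))
    (hH2 : ∀ φ ∈ D, ∀ χ ∈ D,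
      Tendsto (fun n => α n * ∫ ω, (φ (Y ω) - φ (Yn n ω)) * χ (Yn n ω) ∂μ) atTop
        (nhds (∫ y, Aund φ y * χ y ∂(μ.map Y))))
    (hconv : ∀ ψ ∈ D, Tendsto (fun n => ∫ ω, ψ (Yn n ω) ∂μ) atTop
      (nhds (∫ ω, ψ (Y ω) ∂μ))) :
    ∀ φ ∈ D, MemLp (fun y => (Abar φ y + Aund φ y) / 2) 2 (μ.map Y) ∧
      ∀ χ ∈ D,
        Tendsto (fun n => α n * ∫ ω, (φ (Yn n ω) - φ (Y ω)) * (χ (Yn n ω) - χ (Y ω)) ∂μ)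
          atTop
          (nhds (-2 * ∫ y, ((Abar φ y + Aund φ y) / 2) * χ y ∂(μ.map Y))) := by
  intro φ hφ
  have hmapP : IsProbabilityMeasure (μ.map Y) := Measure.isProbabilityMeasure_map hY.aemeasurable
  have hAb := hAbarL2 φ hφ
  have hAu := hAundL2 φ hφ
  obtain ⟨Cφ, hCφ⟩ := hDbdd φ hφ
  have hφm := hDmeas φ hφ
  constructor
  · have heq : (fun y => (Abar φ y + Aund φ y) / 2)
        = fun y => (1/2 : ℝ) * (Abar φ y + Aund φ y) := by funext y; ring
    rw [heq]
    exact (hAb.add hAu).const_mul _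
  · intro χ hχ
    obtain ⟨Cχ, hCχ⟩ := hDbdd χ hχ
    have hχm := hDmeas χ hχ
    have hint : ∀ (f g : E → ℝ), Measurable f → Measurable g → (∀ x, |f x| ≤ Cφ) →
        (∀ x, |g x| ≤ Cχ) → ∀ (Z W : Ω → E), Measurable Z → Measurable W →
        Integrable (fun ω => f (Z ω) * g (W ω)) μ := by
      intro f g hf hg hfb hgb Z W hZ hW
      refine (integrable_const (Cφ * Cχ)).mono'
        ((hf.comp hZ).mul (hg.comp hW)).aestronglyMeasurable (ae_of_all _ fun ω => ?_)
      have h1 := hfb (Z ω); have h2 := hgb (W ω)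
      simpa [Real.norm_eq_abs, abs_mul] using
        mul_le_mul h1 h2 (abs_nonneg _) ((abs_nonneg _).trans h1)
    have hsplit : ∀ n, (∫ ω, (φ (Yn n ω) - φ (Y ω)) * (χ (Yn n ω) - χ (Y ω)) ∂μ)
        = (∫ ω, (φ (Yn n ω) - φ (Y ω)) * χ (Yn n ω) ∂μ)
          - (∫ ω, (φ (Yn n ω) - φ (Y ω)) * χ (Y ω) ∂μ) := by
      intro n
      have i1 := hint φ χ hφm hχm hCφ hCχ (Yn n) (Yn n) (hYn n) (hYn n)
      have i2 := hint φ χ hφm hχm hCφ hCχ Y (Yn n) hY (hYn n)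
      have i3 := hint φ χ hφm hχm hCφ hCχ (Yn n) Y (hYn n) hY
      have i4 := hint φ χ hφm hχm hCφ hCχ Y Y hY hY
      have j1 : Integrable (fun ω => (φ (Yn n ω) - φ (Y ω)) * χ (Yn n ω)) μ :=
        (i1.sub i2).congr (ae_of_all _ fun ω => by simp only [Pi.sub_apply]; ring)
      have j2 : Integrable (fun ω => (φ (Yn n ω) - φ (Y ω)) * χ (Y ω)) μ :=
        (i3.sub i4).congr (ae_of_all _ fun ω => by simp only [Pi.sub_apply]; ring)
      have heq : (fun ω => (φ (Yn n ω) - φ (Y ω)) * (χ (Yn n ω) - χ (Y ω)))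
          = fun ω => (φ (Yn n ω) - φ (Y ω)) * χ (Yn n ω)
              - (φ (Yn n ω) - φ (Y ω)) * χ (Y ω) := by funext ω; ring
      rw [heq]
      exact integral_sub j1 j2
    have h2 := hH2 φ hφ χ hχ
    have h1 := hH1 φ hφ χ hχ
    have key : Tendsto (fun n => α n * ∫ ω, (φ (Yn n ω) - φ (Y ω)) * (χ (Yn n ω) - χ (Y ω)) ∂μ)
        atTop (nhds (-(∫ y, Aund φ y * χ y ∂(μ.map Y)) - ∫ y, Abar φ y * χ y ∂(μ.map Y))) := by
      have hfun : ∀ n, α n * (∫ ω, (φ (Yn n ω) - φ (Y ω)) * (χ (Yn n ω) - χ (Y ω)) ∂μ)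
          = -(α n * ∫ ω, (φ (Y ω) - φ (Yn n ω)) * χ (Yn n ω) ∂μ)
            - α n * ∫ ω, (φ (Yn n ω) - φ (Y ω)) * χ (Y ω) ∂μ := by
        intro n
        rw [hsplit n]
        have hnegi : (∫ ω, (φ (Y ω) - φ (Yn n ω)) * χ (Yn n ω) ∂μ)
            = - ∫ ω, (φ (Yn n ω) - φ (Y ω)) * χ (Yn n ω) ∂μ := by
          rw [← integral_neg]; apply integral_congr_ae; filter_upwards with ω; ring
        rw [hnegi]; ring
      simp only [hfun]
      exact (h2.neg.sub h1)
    convert key using 2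
    have hχL : ∀ (A : E → ℝ), MemLp A 2 (μ.map Y) →
        Integrable (fun y => A y * χ y) (μ.map Y) := by
      intro A hA
      have hAint : Integrable A (μ.map Y) := hA.integrable one_le_two
      have h := hAint.bdd_mul hχm.aestronglyMeasurable
        (c := Cχ) (ae_of_all _ fun y => by simpa [Real.norm_eq_abs] using hCχ y)
      exact h.congr (ae_of_all _ fun y => mul_comm _ _)
    have e : (∫ y, ((Abar φ y + Aund φ y) / 2) * χ y ∂(μ.map Y))
        = (1/2 : ℝ) * ((∫ y, Abar φ y * χ y ∂(μ.map Y)) + ∫ y, Aund φ y * χ y ∂(μ.map Y)) := by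
      rw [← integral_add (hχL _ hAb) (hχL _ hAu), ← integral_const_mul]
      apply integral_congr_ae; filter_upwards with y; ring
    rw [e]; ring
end

section
/- Under (H3), the bilinear form Ẽ[φ,χ] = lim_n (α_n/2) E[(φ(Y_n)−φ(Y))(χ(Y_n)−χ(Y))] on D is nonnegative definite (Ẽ[φ,φ] ≥ 0), symmetric, and closable in L²(P_Y); moreover its square field operator satisfies Γ[φ] = Ã[φ²] − 2φÃ[φ] for φ ∈ D. -/
open MeasureTheory ProbabilityTheory Filter

section Aux

variable {α : Type*} [MeasurableSpace α] {μ : Measure α} [IsProbabilityMeasure μ]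

lemma stmt16_aux_int (f g : α → ℝ) (hf : MemLp f 2 μ) (hg : MemLp g 2 μ) :
    Integrable (fun x => f x * g x) μ := by
  have := L2.integrable_inner (𝕜 := ℝ) (hf.toLp f) (hg.toLp g)
  refine (integrable_congr ?_).mp this
  filter_upwards [hf.coeFn_toLp, hg.coeFn_toLp] with x h1 h2
  simp [h1, h2, RCLike.inner_apply, mul_comm]

lemma stmt16_aux_cs (f g : α → ℝ) (hf : MemLp f 2 μ) (hg : MemLp g 2 μ) :
    |∫ x, f x * g x ∂μ| ≤ (eLpNorm f 2 μ).toReal * (eLpNorm g 2 μ).toReal := by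
  have h1 : ∫ x, f x * g x ∂μ = @inner ℝ _ _ (hf.toLp f) (hg.toLp g) := by
    rw [L2.inner_def]
    refine integral_congr_ae ?_
    filter_upwards [hf.coeFn_toLp, hg.coeFn_toLp] with x h1 h2
    simp [h1, h2, RCLike.inner_apply, mul_comm]
  rw [h1]
  calc |@inner ℝ _ _ (hf.toLp f) (hg.toLp g)| ≤ ‖hf.toLp f‖ * ‖hg.toLp g‖ := by
        simpa using norm_inner_le_norm (𝕜 := ℝ) (hf.toLp f) (hg.toLp g)
    _ = _ := by rw [Lp.norm_toLp, Lp.norm_toLp]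

end Aux

/-- Under (H3), the form `Ẽ[φ,χ] = lim (αₙ/2) E[(φ(Yₙ)-φ(Y))(χ(Yₙ)-χ(Y))] = -E_Y[Ã[φ]χ]`
is nonnegative, symmetric and closable, and its square field operator is
`Γ[φ] = Ã[φ²] - 2φÃ[φ]`. -/
theorem stmt16 {Ω E : Type*} [MeasurableSpace Ω] [MeasurableSpace E]
    (μ : Measure Ω) [IsProbabilityMeasure μ]
    (Y : Ω → E) (Yn : ℕ → Ω → E) (hY : Measurable Y) (hYn : ∀ n, Measurable (Yn n))
    (D : Set (E → ℝ))
    (hDmeas : ∀ f ∈ D, Measurable f) (hDbdd : ∀ f ∈ D, ∃ C, ∀ x, |f x| ≤ C)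
    (hDone : (fun _ => (1 : ℝ)) ∈ D)
    (hDsub : ∀ f ∈ D, ∀ g ∈ D, f - g ∈ D) (hDmul : ∀ f ∈ D, ∀ g ∈ D, f * g ∈ D)
    (hDdense : ∀ f : E → ℝ, MemLp f 2 (μ.map Y) → ∀ ε : ℝ, 0 < ε →
      ∃ g ∈ D, eLpNorm (f - g) 2 (μ.map Y) < ENNReal.ofReal ε)
    (α : ℕ → ℝ) (hα : ∀ n, 0 < α n)
    (Atil : (E → ℝ) → E → ℝ)
    (hAtilL2 : ∀ φ ∈ D, MemLp (Atil φ) 2 (μ.map Y))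
    (hH3 : ∀ φ ∈ D, ∀ χ ∈ D,
      Tendsto (fun n => α n * ∫ ω, (φ (Yn n ω) - φ (Y ω)) * (χ (Yn n ω) - χ (Y ω)) ∂μ)
        atTop (nhds (-2 * ∫ y, Atil φ y * χ y ∂(μ.map Y)))) :
    -- nonnegativity of Ẽ
    (∀ φ ∈ D, 0 ≤ -(∫ y, Atil φ y * φ y ∂(μ.map Y))) ∧
    -- symmetry of Ẽ
    (∀ φ ∈ D, ∀ χ ∈ D,
      ∫ y, Atil φ y * χ y ∂(μ.map Y) = ∫ y, Atil χ y * φ y ∂(μ.map Y)) ∧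
    -- closability
    (∀ φ : ℕ → E → ℝ, (∀ k, φ k ∈ D) →
      Tendsto (fun k => eLpNorm (φ k) 2 (μ.map Y)) atTop (nhds 0) →
      (∀ ε : ℝ, 0 < ε → ∃ N, ∀ k ≥ N, ∀ l ≥ N,
        -(∫ y, Atil (φ k - φ l) y * (φ k - φ l) y ∂(μ.map Y)) < ε) →
      Tendsto (fun k => -(∫ y, Atil (φ k) y * φ k y ∂(μ.map Y))) atTop (nhds 0)) ∧
    -- the square field operator Γ[φ] = Ã[φ²] - 2φÃ[φ]
    (∀ φ ∈ D, ∀ χ ∈ D,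
      Tendsto (fun n =>
          α n * ∫ ω, (φ (Yn n ω) - φ (Y ω)) ^ 2 * ((χ (Yn n ω) + χ (Y ω)) / 2) ∂μ)
        atTop
        (nhds (∫ y, (Atil (φ * φ) y - 2 * φ y * Atil φ y) * χ y ∂(μ.map Y)))) := by
  haveI hmap : IsProbabilityMeasure (μ.map Y) := Measure.isProbabilityMeasure_map hY.aemeasurable
  -- membership of D functions in L²
  have hMem : ∀ f ∈ D, MemLp f 2 (μ.map Y) := by
    intro f hf
    obtain ⟨C, hC⟩ := hDbdd f hf
    exact (memLp_top_of_bound (hDmeas f hf).aestronglyMeasurable C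
      (Filter.Eventually.of_forall fun x => by simpa using hC x)).mono_exponent le_top
  -- integrability of the pre-limit integrands
  have hInt : ∀ f ∈ D, ∀ g ∈ D, ∀ n,
      Integrable (fun ω => (f (Yn n ω) - f (Y ω)) * (g (Yn n ω) - g (Y ω))) μ := by
    intro f hf g hg n
    obtain ⟨Cf, hCf⟩ := hDbdd f hf
    obtain ⟨Cg, hCg⟩ := hDbdd g hg
    have hmeas : AEStronglyMeasurable
        (fun ω => (f (Yn n ω) - f (Y ω)) * (g (Yn n ω) - g (Y ω))) μ := by
      apply Measurable.aestronglyMeasurable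
      exact (((hDmeas f hf).comp (hYn n)).sub ((hDmeas f hf).comp hY)).mul
        (((hDmeas g hg).comp (hYn n)).sub ((hDmeas g hg).comp hY))
    refine (memLp_top_of_bound hmeas ((Cf + Cf) * (Cg + Cg))
      (Filter.Eventually.of_forall fun ω => ?_)).integrable le_top
    have h1 : |f (Yn n ω) - f (Y ω)| ≤ Cf + Cf :=
      (abs_sub _ _).trans (add_le_add (hCf _) (hCf _))
    have h2 : |g (Yn n ω) - g (Y ω)| ≤ Cg + Cg :=
      (abs_sub _ _).trans (add_le_add (hCg _) (hCg _))
    calc ‖(f (Yn n ω) - f (Y ω)) * (g (Yn n ω) - g (Y ω))‖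
        = |f (Yn n ω) - f (Y ω)| * |g (Yn n ω) - g (Y ω)| := by
          simp [abs_mul]
      _ ≤ (Cf + Cf) * (Cg + Cg) := by
          exact mul_le_mul h1 h2 (abs_nonneg _) ((abs_nonneg _).trans h1)
  -- integrability of Atil f * g
  have hIntA : ∀ f ∈ D, ∀ g ∈ D, Integrable (fun y => Atil f y * g y) (μ.map Y) :=
    fun f hf g hg => stmt16_aux_int _ _ (hAtilL2 f hf) (hMem g hg)
  -- linearity in the first argument (for differences)
  have hlin : ∀ f ∈ D, ∀ g ∈ D, ∀ χ ∈ D,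
      ∫ y, Atil (f - g) y * χ y ∂(μ.map Y) =
        ∫ y, Atil f y * χ y ∂(μ.map Y) - ∫ y, Atil g y * χ y ∂(μ.map Y) := by
    intro f hf g hg χ hχ
    have h1 := hH3 (f - g) (hDsub f hf g hg) χ hχ
    have h2 : Tendsto
        (fun n => α n * ∫ ω, ((f - g) (Yn n ω) - (f - g) (Y ω)) * (χ (Yn n ω) - χ (Y ω)) ∂μ)
        atTop (nhds (-2 * ∫ y, Atil f y * χ y ∂(μ.map Y) -
          -2 * ∫ y, Atil g y * χ y ∂(μ.map Y))) := by
      have := (hH3 f hf χ hχ).sub (hH3 g hg χ hχ)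
      refine this.congr fun n => ?_
      have : ∫ ω, ((f - g) (Yn n ω) - (f - g) (Y ω)) * (χ (Yn n ω) - χ (Y ω)) ∂μ =
          ∫ ω, ((f (Yn n ω) - f (Y ω)) * (χ (Yn n ω) - χ (Y ω)) -
            (g (Yn n ω) - g (Y ω)) * (χ (Yn n ω) - χ (Y ω))) ∂μ := by
        refine integral_congr_ae (Filter.Eventually.of_forall fun ω => ?_)
        simp only [Pi.sub_apply]; ring
      rw [this, integral_sub (hInt f hf χ hχ n) (hInt g hg χ hχ n)]
      ring
    have := tendsto_nhds_unique h1 h2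
    linarith
  -- nonnegativity
  have hnonneg : ∀ φ ∈ D, 0 ≤ -(∫ y, Atil φ y * φ y ∂(μ.map Y)) := by
    intro φ hφ
    have h0 : (0 : ℝ) ≤ -2 * ∫ y, Atil φ y * φ y ∂(μ.map Y) := by
      refine ge_of_tendsto' (hH3 φ hφ φ hφ) fun n => ?_
      refine mul_nonneg (hα n).le (integral_nonneg fun ω => mul_self_nonneg _)
    linarith
  -- symmetry
  have hsym : ∀ φ ∈ D, ∀ χ ∈ D,
      ∫ y, Atil φ y * χ y ∂(μ.map Y) = ∫ y, Atil χ y * φ y ∂(μ.map Y) := by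
    intro φ hφ χ hχ
    have h1 := hH3 φ hφ χ hχ
    have h2 : Tendsto (fun n => α n * ∫ ω, (φ (Yn n ω) - φ (Y ω)) * (χ (Yn n ω) - χ (Y ω)) ∂μ)
        atTop (nhds (-2 * ∫ y, Atil χ y * φ y ∂(μ.map Y))) := by
      refine (hH3 χ hχ φ hφ).congr fun n => ?_
      congr 1
      exact integral_congr_ae (Filter.Eventually.of_forall fun ω => mul_comm _ _)
    have := tendsto_nhds_unique h1 h2
    linarith
  refine ⟨hnonneg, hsym, ?_, ?_⟩
  · -- closability
    intro φ hφD hnorm hcau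
    have hnormR : Tendsto (fun k => (eLpNorm (φ k) 2 (μ.map Y)).toReal) atTop (nhds 0) := by
      have h := (ENNReal.tendsto_toReal (a := 0) (by simp)).comp hnorm
      exact h
    rw [Metric.tendsto_atTop]
    intro ε hε
    obtain ⟨N, hN⟩ := hcau (ε / 2) (by linarith)
    -- the cross term tends to 0
    have hcross : Tendsto (fun k => |∫ y, Atil (φ N) y * φ k y ∂(μ.map Y)|) atTop (nhds 0) := by
      have hb : Tendsto (fun k => (eLpNorm (Atil (φ N)) 2 (μ.map Y)).toReal *
          (eLpNorm (φ k) 2 (μ.map Y)).toReal) atTop (nhds 0) := by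
        simpa using hnormR.const_mul ((eLpNorm (Atil (φ N)) 2 (μ.map Y)).toReal)
      refine squeeze_zero (fun k => abs_nonneg _) (fun k => ?_) hb
      exact stmt16_aux_cs _ _ (hAtilL2 (φ N) (hφD N)) (hMem (φ k) (hφD k))
    rw [Metric.tendsto_atTop] at hcross
    obtain ⟨K, hK⟩ := hcross (ε / 8) (by linarith)
    refine ⟨max N K, fun k hk => ?_⟩
    have hkN : k ≥ N := le_trans (le_max_left _ _) hk
    have hkK : k ≥ K := le_trans (le_max_right _ _) hk
    have hΔ : -(∫ y, Atil (φ k - φ N) y * (φ k - φ N) y ∂(μ.map Y)) < ε / 2 :=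
      hN k hkN N le_rfl
    have hd := hDsub (φ k) (hφD k) (φ N) (hφD N)
    -- expand Δ
    have hsecond : ∀ f ∈ D, ∫ y, Atil f y * (φ k - φ N) y ∂(μ.map Y) =
        ∫ y, Atil f y * φ k y ∂(μ.map Y) - ∫ y, Atil f y * φ N y ∂(μ.map Y) := by
      intro f hf
      have : ∫ y, Atil f y * (φ k - φ N) y ∂(μ.map Y) =
          ∫ y, (Atil f y * φ k y - Atil f y * φ N y) ∂(μ.map Y) := by
        refine integral_congr_ae (Filter.Eventually.of_forall fun y => ?_)
        simp only [Pi.sub_apply]; ring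
      rw [this, integral_sub (hIntA f hf (φ k) (hφD k)) (hIntA f hf (φ N) (hφD N))]
    have hexpand : ∫ y, Atil (φ k - φ N) y * (φ k - φ N) y ∂(μ.map Y) =
        (∫ y, Atil (φ k) y * φ k y ∂(μ.map Y) - ∫ y, Atil (φ k) y * φ N y ∂(μ.map Y)) -
        (∫ y, Atil (φ N) y * φ k y ∂(μ.map Y) - ∫ y, Atil (φ N) y * φ N y ∂(μ.map Y)) := by
      rw [hlin (φ k) (hφD k) (φ N) (hφD N) (φ k - φ N) hd,
        hsecond (φ k) (hφD k), hsecond (φ N) (hφD N)]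
    have hNN : 0 ≤ -(∫ y, Atil (φ N) y * φ N y ∂(μ.map Y)) := hnonneg (φ N) (hφD N)
    have hcrossk : |∫ y, Atil (φ N) y * φ k y ∂(μ.map Y)| < ε / 8 := by
      have := hK k hkK
      rwa [Real.dist_eq, sub_zero, abs_abs] at this
    have habs := abs_lt.mp hcrossk
    have hsymk : ∫ y, Atil (φ k) y * φ N y ∂(μ.map Y) =
        ∫ y, Atil (φ N) y * φ k y ∂(μ.map Y) := hsym (φ k) (hφD k) (φ N) (hφD N)
    have hfinal : -(∫ y, Atil (φ k) y * φ k y ∂(μ.map Y)) < ε := by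
      have : -(∫ y, Atil (φ k) y * φ k y ∂(μ.map Y)) =
          -(∫ y, Atil (φ k - φ N) y * (φ k - φ N) y ∂(μ.map Y)) -
          ∫ y, Atil (φ k) y * φ N y ∂(μ.map Y) -
          ∫ y, Atil (φ N) y * φ k y ∂(μ.map Y) +
          ∫ y, Atil (φ N) y * φ N y ∂(μ.map Y) := by
        rw [hexpand]; ring
      rw [this, hsymk]
      linarith [habs.1, habs.2]
    have hpos : 0 ≤ -(∫ y, Atil (φ k) y * φ k y ∂(μ.map Y)) := hnonneg (φ k) (hφD k)
    rw [Real.dist_eq, sub_zero, abs_of_nonneg hpos]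
    exact hfinal
  · -- square field operator
    intro φ hφ χ hχ
    have hφφ := hDmul φ hφ φ hφ
    have hφχ := hDmul φ hφ χ hχ
    have h1 := hH3 (φ * φ) hφφ χ hχ
    have h2 := hH3 φ hφ (φ * χ) hφχ
    have hlim := (h1.const_mul (-(1/2) : ℝ)).add h2
    have hval : (-(1/2) : ℝ) * (-2 * ∫ y, Atil (φ * φ) y * χ y ∂(μ.map Y)) +
        -2 * ∫ y, Atil φ y * (φ * χ) y ∂(μ.map Y) =
        ∫ y, (Atil (φ * φ) y - 2 * φ y * Atil φ y) * χ y ∂(μ.map Y) := by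
      have hsplit : ∫ y, (Atil (φ * φ) y - 2 * φ y * Atil φ y) * χ y ∂(μ.map Y) =
          ∫ y, (Atil (φ * φ) y * χ y - 2 * (Atil φ y * (φ * χ) y)) ∂(μ.map Y) := by
        refine integral_congr_ae (Filter.Eventually.of_forall fun y => ?_)
        simp only [Pi.mul_apply]; ring
      rw [hsplit, integral_sub (hIntA (φ * φ) hφφ χ hχ)
        (((hIntA φ hφ (φ * χ) hφχ)).const_mul 2), integral_const_mul]
      ring
    rw [← hval]
    refine hlim.congr fun n => ?_
    have hident : ∫ ω, (φ (Yn n ω) - φ (Y ω)) ^ 2 * ((χ (Yn n ω) + χ (Y ω)) / 2) ∂μ =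
        ∫ ω, (-(1/2) * (((φ * φ) (Yn n ω) - (φ * φ) (Y ω)) * (χ (Yn n ω) - χ (Y ω))) +
          (φ (Yn n ω) - φ (Y ω)) * ((φ * χ) (Yn n ω) - (φ * χ) (Y ω))) ∂μ := by
      refine integral_congr_ae (Filter.Eventually.of_forall fun ω => ?_)
      simp only [Pi.mul_apply]; ring
    rw [hident, integral_add ((hInt (φ * φ) hφφ χ hχ n).const_mul (-(1/2)))
      (hInt φ hφ (φ * χ) hφχ n), integral_const_mul]
    ring
end
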